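/- Let M be an F[X]-module that is finite-dimensional over F and cyclic (generated by one element). Then M is isomorphic as an F[X]-module to its F-linear dual M^∨. -/

import Mathlib

open Polynomial Module

section Aux
variable {F : Type*} [Field F]

/-- Key lemma: for an ideal `I` of `F[X]` with finite-dimensional quotient, there is a
self-duality of the quotient intertwining multiplication by `X`. -/
lemma aux_exists_pairing (I : Ideal F[X]) [FiniteDimensional F (F[X] ⧸ I)] :
    ∃ Ψ : (F[X] ⧸ I) ≃ₗ[F] Module.Dual F (F[X] ⧸ I),
      ∀ a b : F[X] ⧸ I,
        Ψ ((Ideal.Quotient.mk I X) * a) b = Ψ a ((Ideal.Quotient.mk I X) * b) := by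
  classical
  -- `I` is nonzero
  have hI : I ≠ ⊥ := by
    rintro rfl
    have : FiniteDimensional F F[X] :=
      Module.Finite.equiv ((Submodule.quotEquivOfEqBot (⊥ : Ideal F[X]) rfl).restrictScalars F)
    exact Polynomial.not_finite this
  have hg : Submodule.IsPrincipal.generator I ≠ 0 := fun h =>
    hI ((Submodule.IsPrincipal.eq_bot_iff_generator_eq_zero I).2 h)
  set g := Submodule.IsPrincipal.generator I with hgdef
  set q : F[X] := g * C g.leadingCoeff⁻¹ with hqdef
  have hq : q.Monic := monic_mul_leadingCoeff_inv hg
  have hCu : IsUnit (C g.leadingCoeff⁻¹) := by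
    rw [Polynomial.isUnit_C]
    exact isUnit_iff_ne_zero.mpr (inv_ne_zero (leadingCoeff_ne_zero.mpr hg))
  have hspan : I = Ideal.span {q} := by
    rw [← Ideal.span_singleton_generator I, Ideal.span_singleton_eq_span_singleton]
    exact ⟨hCu.unit, rfl⟩
  set n := q.natDegree with hndef
  set D : F[X] →ₗ[F] F := (lcoeff F (n - 1)).comp (modByMonicHom q) with hDdef
  have hker : I.restrictScalars F ≤ LinearMap.ker D := by
    intro f hf
    have hdvd : q ∣ f := Ideal.mem_span_singleton.mp (by rwa [← hspan])
    have h0 : f %ₘ q = 0 := (modByMonic_eq_zero_iff_dvd hq).mpr hdvd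
    simp [hDdef, h0]
  set τ : (F[X] ⧸ I) →ₗ[F] F :=
    (Submodule.liftQ (I.restrictScalars F) D hker).comp
      ((Submodule.Quotient.restrictScalarsEquiv F I).symm.toLinearMap) with hτdef
  have hτ : ∀ f : F[X], τ (Ideal.Quotient.mk I f) = (f %ₘ q).coeff (n - 1) := by
    intro f
    have h1 : (Submodule.Quotient.restrictScalarsEquiv F I).symm (Ideal.Quotient.mk I f) =
        Submodule.Quotient.mk f := by
      rw [LinearEquiv.symm_apply_eq, Submodule.Quotient.restrictScalarsEquiv_mk]
      rfl
    simp [hτdef, h1, hDdef]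
  set Ψlin : (F[X] ⧸ I) →ₗ[F] Module.Dual F (F[X] ⧸ I) :=
    (LinearMap.llcomp F _ _ F τ).comp (LinearMap.mul F (F[X] ⧸ I)) with hΨdef
  have hΨapp : ∀ a b : F[X] ⧸ I, Ψlin a b = τ (a * b) := fun a b => rfl
  have hinj : Function.Injective Ψlin := by
    rw [injective_iff_map_eq_zero]
    intro a ha
    by_contra ha0
    obtain ⟨f, rfl⟩ := Ideal.Quotient.mk_surjective a
    set f' := f %ₘ q with hf'def
    have hmk : Ideal.Quotient.mk I f' = Ideal.Quotient.mk I f := by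
      rw [Ideal.Quotient.mk_eq_mk_iff_sub_mem]
      have h := modByMonic_add_div f q
      have hfd : f' - f = -(q * (f /ₘ q)) := by
        rw [hf'def]; linear_combination h
      rw [hfd]
      exact neg_mem (hspan ▸ Ideal.mem_span_singleton.mpr (dvd_mul_right q _))
    have hf'0 : f' ≠ 0 := by
      intro h
      exact ha0 (by rw [← hmk, h, map_zero])
    have hdeg : f'.degree < q.degree := degree_modByMonic_lt f hq
    have hd : f'.natDegree < n := natDegree_lt_natDegree hf'0 hdeg
    set d := f'.natDegree with hddef
    set k := n - 1 - d with hkdef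
    have hdk : d + k = n - 1 := by omega
    have key : Ψlin ((Ideal.Quotient.mk I) f) (Ideal.Quotient.mk I (X ^ k)) ≠ 0 := by
      rw [← hmk, hΨapp, ← map_mul, hτ]
      have hmod : (f' * X ^ k) %ₘ q = f' * X ^ k := by
        rw [modByMonic_eq_self_iff hq]
        have h1 : (f' * X ^ k).degree = ((d + k : ℕ) : WithBot ℕ) := by
          rw [degree_mul, degree_X_pow, degree_eq_natDegree hf'0]
          exact_mod_cast rfl
        have h2 : q.degree = (n : WithBot ℕ) := degree_eq_natDegree hq.ne_zero
        rw [h1, h2]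
        exact_mod_cast (by omega : d + k < n)
      rw [hmod]
      have : (f' * X ^ k).coeff (n - 1) = f'.coeff d := by
        rw [← hdk]
        exact coeff_mul_X_pow f' k d
      rw [this]
      exact leadingCoeff_ne_zero.mpr hf'0
    exact key (by rw [ha]; rfl)
  have hsurj : Function.Surjective Ψlin :=
    (LinearMap.injective_iff_surjective_of_finrank_eq_finrank
      (Subspace.dual_finrank_eq).symm).mp hinj
  refine ⟨LinearEquiv.ofBijective Ψlin ⟨hinj, hsurj⟩, fun a b => ?_⟩
  show Ψlin _ b = Ψlin a _
  rw [hΨapp, hΨapp, mul_comm (Ideal.Quotient.mk I X) a, mul_assoc]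

end Aux

/-- The action of `X` on an `F[X]`-module, as an `F`-linear endomorphism. -/
noncomputable def XEnd (F M : Type*) [Field F] [AddCommGroup M] [Module F M]
    [Module F[X] M] [IsScalarTower F F[X] M] : M →ₗ[F] M where
  toFun m := (X : F[X]) • m
  map_add' a b := smul_add _ a b
  map_smul' c m := (smul_comm c (X : F[X]) m).symm

/-- A cyclic `F[X]`-module that is finite-dimensional over `F` is isomorphic, as an
`F[X]`-module, to its `F`-linear dual (with action `(f·φ)(m) = φ(f·m)`). -/
theorem stmt11 {F M : Type*} [Field F] [AddCommGroup M] [Module F M]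
    [Module F[X] M] [IsScalarTower F F[X] M] [FiniteDimensional F M]
    (hcyc : ∃ m : M, Submodule.span F[X] {m} = ⊤) :
    Nonempty (M ≃ₗ[F[X]] Module.AEval' ((XEnd F M).dualMap)) := by
  classical
  obtain ⟨m₀, hm₀⟩ := hcyc
  set I : Ideal F[X] := Ideal.torsionOf F[X] M m₀ with hIdef
  let e : (F[X] ⧸ I) ≃ₗ[F[X]] M :=
    (Ideal.quotTorsionOfEquivSpanSingleton F[X] M m₀).trans (LinearEquiv.ofTop _ hm₀)
  let eF : (F[X] ⧸ I) ≃ₗ[F] M := e.restrictScalars F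
  haveI : FiniteDimensional F (F[X] ⧸ I) := Module.Finite.equiv eF.symm
  obtain ⟨Ψ, hΨ⟩ := aux_exists_pairing I
  let ΨM : M ≃ₗ[F] Module.Dual F M := (eF.symm.trans Ψ).trans eF.symm.dualMap
  have heF : ∀ x : M, eF.symm ((X : F[X]) • x) = (Ideal.Quotient.mk I X) * eF.symm x := by
    intro x
    have h1 : eF.symm ((X : F[X]) • x) = (X : F[X]) • eF.symm x := by
      show e.symm ((X : F[X]) • x) = (X : F[X]) • e.symm x
      exact map_smul e.symm _ _
    rw [h1]
    obtain ⟨f, hf⟩ := Ideal.Quotient.mk_surjective (eF.symm x)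
    rw [← hf, ← map_mul]
    rfl
  have hkey : ∀ x : M, ΨM ((X : F[X]) • x) = (XEnd F M).dualMap (ΨM x) := by
    intro x
    ext y
    show Ψ (eF.symm ((X : F[X]) • x)) (eF.symm y) = Ψ (eF.symm x) (eF.symm (XEnd F M y))
    rw [heF x, hΨ, ← heF y]
    rfl
  refine ⟨(LinearEquiv.ofAEval ((XEnd F M).dualMap) ΨM.symm ?_).symm⟩
  intro ψ
  apply ΨM.injective
  rw [LinearEquiv.apply_symm_apply, hkey]
  congr 1
  exact (LinearEquiv.apply_symm_apply ΨM ψ).symm
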